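/- At ε = 0, the criterion of Theorem 2 is tighter than that of Theorem 1: (1/n) Σ_{x ∈ 𝒰} L(d̃₊(x,ℒK), d̃₋(x,ℒK)) ≤ (2kμ/n) Σ_{x ∈ 𝒰} d(x, ℒK), where L is symmetric, μ-Lipschitz, satisfies the triangle inequality and L(y,y)=0, and f is k-Lipschitz. -/

import Mathlib

/-- At `ε = 0`, the criterion of Theorem 2 is tighter than that of Theorem 1. -/
theorem stmt13 {X : Type*} [MetricSpace X] (k μ : ℝ) (hk : 0 ≤ k) (L : ℝ → ℝ → ℝ)
    (hLnonneg : ∀ y y', 0 ≤ L y y')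
    (hLsymm : ∀ y y', L y y' = L y' y)
    (hLtri : ∀ a b c, L a c ≤ L a b + L b c)
    (hLlip : ∀ y y', L y y' ≤ μ * |y - y'|)
    (hLrefl : ∀ y, L y y = 0)
    (f : X → ℝ) (hf : ∀ a b, |f a - f b| ≤ k * dist a b)
    (LK : Finset X) (hLK : LK.Nonempty) (U : Finset X) :
    (1 / U.card : ℝ) * ∑ x ∈ U,
        L (LK.inf' hLK (fun x' => f x' + k * dist x x'))
          (LK.sup' hLK (fun x' => f x' - k * dist x x'))
      ≤ (2 * k * μ / U.card) * ∑ x ∈ U, LK.inf' hLK (fun x' => dist x x') := by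
  have hμ : 0 ≤ μ := by
    have h1 := hLnonneg 0 1
    have h2 := hLlip 0 1
    simp at h2
    linarith
  have key : ∀ x : X,
      L (LK.inf' hLK (fun x' => f x' + k * dist x x'))
        (LK.sup' hLK (fun x' => f x' - k * dist x x'))
      ≤ 2 * k * μ * LK.inf' hLK (fun x' => dist x x') := by
    intro x
    set P := LK.inf' hLK (fun x' => f x' + k * dist x x') with hP
    set M := LK.sup' hLK (fun x' => f x' - k * dist x x') with hM
    -- M ≤ P
    have hMP : M ≤ P := by
      apply Finset.sup'_le
      intro b hb
      rw [hP]
      apply Finset.le_inf'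
      intro a ha
      have := hf b a
      have habs := abs_le.1 this
      have htr : dist b a ≤ dist b x + dist x a := dist_triangle b x a
      have hkm : k * dist b a ≤ k * (dist b x + dist x a) :=
        mul_le_mul_of_nonneg_left htr hk
      have h1 : f b - f a ≤ k * (dist b x + dist x a) := le_trans habs.2 hkm
      have hxb : dist b x = dist x b := dist_comm b x
      nlinarith [habs.2]
    obtain ⟨x0, hx0, hx0eq⟩ := Finset.exists_mem_eq_inf' hLK (fun x' => dist x x')
    have hPle : P ≤ f x0 + k * dist x x0 := Finset.inf'_le _ hx0
    have hMge : f x0 - k * dist x x0 ≤ M := Finset.le_sup' (fun x' => f x' - k * dist x x') hx0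
    have hdiff : P - M ≤ 2 * k * dist x x0 := by linarith
    have := hLlip P M
    rw [abs_of_nonneg (by linarith : (0:ℝ) ≤ P - M)] at this
    have hd : LK.inf' hLK (fun x' => dist x x') = dist x x0 := hx0eq
    rw [hd]
    nlinarith [mul_le_mul_of_nonneg_left hdiff hμ]
  have hsum : ∑ x ∈ U,
      L (LK.inf' hLK (fun x' => f x' + k * dist x x'))
        (LK.sup' hLK (fun x' => f x' - k * dist x x'))
      ≤ 2 * k * μ * ∑ x ∈ U, LK.inf' hLK (fun x' => dist x x') := by
    rw [Finset.mul_sum]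
    exact Finset.sum_le_sum fun x _ => key x
  have hn : (0:ℝ) ≤ 1 / U.card := by positivity
  calc (1 / U.card : ℝ) * ∑ x ∈ U,
        L (LK.inf' hLK (fun x' => f x' + k * dist x x'))
          (LK.sup' hLK (fun x' => f x' - k * dist x x'))
      ≤ (1 / U.card : ℝ) * (2 * k * μ * ∑ x ∈ U, LK.inf' hLK (fun x' => dist x x')) :=
        mul_le_mul_of_nonneg_left hsum hn
    _ = (2 * k * μ / U.card) * ∑ x ∈ U, LK.inf' hLK (fun x' => dist x x') := by ring
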